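/- In the hypercube Q_d, the set X_p of all vertices whose binary label contains exactly p ones is a mutual-visibility set, for any 0 ≤ p ≤ d. -/

import Mathlib

open SimpleGraph

/-- Two vertices are `X`-visible in `G`: some shortest path between them has
no internal vertex in `X`. -/
def IsVisiblePair {V : Type*} (G : SimpleGraph V) (X : Set V) (x y : V) : Prop :=
  ∃ p : G.Walk x y, p.IsPath ∧ p.length = G.dist x y ∧
    ∀ z ∈ p.support, z ∈ X → z = x ∨ z = y

/-- `X` is a mutual-visibility set of `G`. -/
def MutualVisSet {V : Type*} (G : SimpleGraph V) (X : Set V) : Prop :=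
  ∀ x ∈ X, ∀ y ∈ X, IsVisiblePair G X x y

/-- `X` is a total mutual-visibility set of `G`. -/
def TotalMutualVisSet {V : Type*} (G : SimpleGraph V) (X : Set V) : Prop :=
  ∀ x y : V, IsVisiblePair G X x y

/-- The mutual-visibility number `μ(G)`. -/
noncomputable def mutualVisNum {V : Type*} (G : SimpleGraph V) : ℕ :=
  sSup {n | ∃ X : Set V, MutualVisSet G X ∧ X.ncard = n}

/-- The total mutual-visibility number `μₜ(G)`. -/
noncomputable def totalMutualVisNum {V : Type*} (G : SimpleGraph V) : ℕ :=
  sSup {n | ∃ X : Set V, TotalMutualVisSet G X ∧ X.ncard = n}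

/-- A set of vertices is convex: every shortest path in `G` between two of its
vertices has all its vertices in the set. -/
def ConvexSet {V : Type*} (G : SimpleGraph V) (S : Set V) : Prop :=
  ∀ x ∈ S, ∀ y ∈ S, ∀ p : G.Walk x y, p.IsPath → p.length = G.dist x y →
    ∀ z ∈ p.support, z ∈ S

/-- The hypercube `Q_d`: vertices are `{0,1}^d`, adjacency is Hamming distance 1. -/
def Qube (d : ℕ) : SimpleGraph (Fin d → Bool) :=
  SimpleGraph.fromRel (fun x y => hammingDist x y = 1)

namespace LayerMV
variable {d : ℕ}

def flip (x : Fin d → Bool) (i : Fin d) : Fin d → Bool := Function.update x i (!x i)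

lemma flip_apply (x : Fin d → Bool) (i j : Fin d) :
    flip x i j = if j = i then !x i else x j := Function.update_apply ..

lemma hamming_flip (x : Fin d → Bool) (i : Fin d) : hammingDist x (flip x i) = 1 := by
  unfold hammingDist
  have h : ({j | x j ≠ flip x i j} : Finset (Fin d)) = {i} := by
    ext j
    rcases eq_or_ne j i with rfl | hj
    · simp [flip_apply]
    · simp [flip_apply, hj]
  rw [h, Finset.card_singleton]

lemma adj_flip (x : Fin d → Bool) (i : Fin d) : (Qube d).Adj x (flip x i) := by
  rw [Qube, SimpleGraph.fromRel_adj]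
  refine ⟨fun h => ?_, Or.inl (hamming_flip x i)⟩
  have := congrFun h i
  simp [flip_apply] at this

def flipWalk (x : Fin d → Bool) : (l : List (Fin d)) → (Qube d).Walk x (l.foldl flip x)
  | [] => Walk.nil
  | i :: l => Walk.cons (adj_flip x i) (flipWalk (flip x i) l)

lemma length_flipWalk (x : Fin d → Bool) (l : List (Fin d)) :
    (flipWalk x l).length = l.length := by
  induction l generalizing x with
  | nil => rfl
  | cons i l ih => simp [flipWalk, ih]

lemma support_flipWalk (x : Fin d → Bool) (l : List (Fin d)) :
    (flipWalk x l).support = (List.range (l.length + 1)).map fun m => (l.take m).foldl flip x := by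
  induction l generalizing x with
  | nil => simp [flipWalk]
  | cons i l ih =>
      rw [show (flipWalk x (i :: l)).support = x :: (flipWalk (flip x i) l).support from rfl, ih]
      conv_rhs => rw [show (i :: l).length + 1 = (l.length+1) + 1 from rfl, List.range_succ_eq_map]
      simp only [List.map_cons, List.map_map, List.take_zero, List.foldl_nil,
        Function.comp_def, List.take_succ_cons, List.foldl_cons]

lemma foldl_flip_apply (l : List (Fin d)) (hl : l.Nodup) (x : Fin d → Bool) (j : Fin d) :
    l.foldl flip x j = if j ∈ l then !x j else x j := by
  induction l generalizing x with
  | nil => simp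
  | cons i l ih =>
      rw [List.nodup_cons] at hl
      rw [List.foldl_cons, ih hl.2]
      rcases eq_or_ne j i with rfl | hj
      · simp [hl.1, flip_apply]
      · simp [flip_apply, hj]


lemma foldl_take_injOn (l : List (Fin d)) (hl : l.Nodup) (x : Fin d → Bool)
    {m₁ m₂ : ℕ} (h₁ : m₁ < m₂) (h₂ : m₂ ≤ l.length) :
    (l.take m₁).foldl flip x ≠ (l.take m₂).foldl flip x := by
  intro h
  have hm₁ : m₁ < l.length := lt_of_lt_of_le h₁ h₂
  have hlen : m₁ < (l.take m₂).length := by simp [List.length_take]; omega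
  have hmem₂ : l[m₁] ∈ l.take m₂ := by
    have : (l.take m₂)[m₁] = l[m₁] := List.getElem_take
    exact this ▸ List.getElem_mem hlen
  have hmem₁ : l[m₁] ∉ l.take m₁ := by
    intro hc
    obtain ⟨j, hj, hval⟩ := List.getElem_of_mem hc
    have hjlt : j < m₁ := by simp [List.length_take] at hj; omega
    rw [List.getElem_take] at hval
    have := (List.Nodup.getElem_inj_iff hl).mp hval
    omega
  have e₁ := foldl_flip_apply (l.take m₁) (List.Nodup.sublist (List.take_sublist _ _) hl) x l[m₁]
  have e₂ := foldl_flip_apply (l.take m₂) (List.Nodup.sublist (List.take_sublist _ _) hl) x l[m₁]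
  rw [h, e₂, if_pos hmem₂] at e₁
  rw [if_neg hmem₁] at e₁
  simp at e₁

lemma flipWalk_isPath (x : Fin d → Bool) (l : List (Fin d)) (hl : l.Nodup) :
    (flipWalk x l).IsPath := by
  rw [Walk.isPath_def, support_flipWalk]
  refine List.Nodup.map_on ?_ List.nodup_range
  intro m₁ hm₁ m₂ hm₂ h
  rw [List.mem_range] at hm₁ hm₂
  by_contra hne
  rcases lt_or_gt_of_ne hne with hlt | hlt
  · exact foldl_take_injOn l hl x hlt (by omega) h
  · exact foldl_take_injOn l hl x hlt (by omega) h.symm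

def wt (x : Fin d → Bool) : ℕ := (Finset.univ.filter fun i => x i = true).card

lemma wt_eq_sum (x : Fin d → Bool) : wt x = ∑ j, if x j = true then 1 else 0 := by
  rw [wt, Finset.card_filter]

lemma wt_flip (x : Fin d → Bool) (i : Fin d) :
    wt (flip x i) = if x i = true then wt x - 1 else wt x + 1 := by
  have key : ∀ y : Fin d → Bool,
      wt y = (if y i = true then 1 else 0) + ∑ j ∈ Finset.univ.erase i, (if y j = true then 1 else 0) := by
    intro y
    rw [wt_eq_sum, ← Finset.add_sum_erase _ _ (Finset.mem_univ i)]
  have herase : ∑ j ∈ Finset.univ.erase i, (if flip x i j = true then 1 else 0)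
      = ∑ j ∈ Finset.univ.erase i, (if x j = true then 1 else 0) := by
    refine Finset.sum_congr rfl fun j hj => ?_
    rw [flip_apply, if_neg (Finset.ne_of_mem_erase hj)]
  have h1 := key (flip x i)
  have h2 := key x
  rw [herase] at h1
  rw [flip_apply, if_pos rfl] at h1
  cases hxi : x i <;> simp [hxi] at h1 h2 ⊢ <;> omega

lemma wt_foldl (l : List (Fin d)) (hl : l.Nodup) (x : Fin d → Bool) :
    wt (l.foldl flip x) + (l.countP fun i => x i = true) =
      wt x + (l.countP fun i => x i = false) := by
  induction l generalizing x with
  | nil => simp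
  | cons i l ih =>
      rw [List.nodup_cons] at hl
      have hih := ih hl.2 (flip x i)
      have hct : ∀ b : Bool, (l.countP fun j => flip x i j = b) = l.countP fun j => x j = b := by
        intro b
        refine List.countP_congr fun j hj => ?_
        rw [flip_apply, if_neg (by rintro rfl; exact hl.1 hj)]
      rw [hct, hct] at hih
      rw [List.foldl_cons, List.countP_cons, List.countP_cons]
      have hw := wt_flip x i
      have hwpos : x i = true → 1 ≤ wt x := fun h =>
        Finset.card_pos.mpr ⟨i, by simp [h]⟩
      set ct := l.countP fun j => x j = true with hct'
      set cf := l.countP fun j => x j = false with hcf'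
      cases hxi : x i
      · rw [hxi, if_neg (by simp)] at hw
        norm_num
        omega
      · rw [hxi, if_pos rfl] at hw
        have h1 := hwpos hxi
        norm_num
        omega

lemma hamming_le_length {x y : Fin d → Bool} (w : (Qube d).Walk x y) :
    hammingDist x y ≤ w.length := by
  induction w with
  | nil => simp
  | @cons a b c h w ih =>
      have hab : hammingDist a b = 1 := by
        rw [Qube, SimpleGraph.fromRel_adj] at h
        rcases h.2 with h' | h'
        · exact h'
        · rw [hammingDist_comm]; exact h'
      calc hammingDist a c ≤ hammingDist a b + hammingDist b c := hammingDist_triangle _ _ _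
        _ ≤ 1 + w.length := by rw [hab]; omega
        _ = (Walk.cons h w).length := by simp [Walk.length_cons]; omega

end LayerMV


/-- In `Q_d`, the set of all vertices with exactly `p` ones is a
mutual-visibility set, for any `0 ≤ p ≤ d`. -/
theorem layer_mutualVisSet (d p : ℕ) (hp : p ≤ d) :
    MutualVisSet (Qube d)
      {x : Fin d → Bool | (Finset.univ.filter fun i => x i = true).card = p} := by
  classical
  intro x hx y hy
  simp only [Set.mem_setOf_eq] at hx hy
  have hx' : LayerMV.wt x = p := hx
  set up := (Finset.univ.filter fun i => x i = false ∧ y i = true).toList with hup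
  set dn := (Finset.univ.filter fun i => x i = true ∧ y i = false).toList with hdn
  have hmem_up : ∀ j, j ∈ up ↔ (x j = false ∧ y j = true) := by
    intro j; rw [hup, Finset.mem_toList, Finset.mem_filter]; simp
  have hmem_dn : ∀ j, j ∈ dn ↔ (x j = true ∧ y j = false) := by
    intro j; rw [hdn, Finset.mem_toList, Finset.mem_filter]; simp
  set l := up ++ dn with hldef
  have hnd : l.Nodup := by
    refine List.Nodup.append (Finset.nodup_toList _) (Finset.nodup_toList _) ?_
    intro a ha hb
    rw [hmem_up] at ha
    rw [hmem_dn] at hb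
    rw [ha.1] at hb
    exact absurd hb.1 (by simp)
  have hmem_l : ∀ j, j ∈ l ↔ x j ≠ y j := by
    intro j
    rw [hldef, List.mem_append, hmem_up, hmem_dn]
    cases hxj : x j <;> cases hyj : y j <;> simp
  have hfold : l.foldl LayerMV.flip x = y := by
    funext j
    rw [LayerMV.foldl_flip_apply l hnd]
    by_cases hj : j ∈ l
    · rw [if_pos hj]
      have := (hmem_l j).mp hj
      cases hxj : x j <;> cases hyj : y j <;> simp_all
    · rw [if_neg hj]
      by_contra hne
      exact hj ((hmem_l j).mpr hne)
  have hkk : up.length = dn.length := by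
    have e1 : ((Finset.univ.filter fun i => x i = true).filter fun i => y i = true).card
        + ((Finset.univ.filter fun i => x i = true).filter fun i => ¬ (y i = true)).card = p := by
      rw [Finset.card_filter_add_card_filter_not, hx]
    have e2 : ((Finset.univ.filter fun i => y i = true).filter fun i => x i = true).card
        + ((Finset.univ.filter fun i => y i = true).filter fun i => ¬ (x i = true)).card = p := by
      rw [Finset.card_filter_add_card_filter_not, hy]
    have ecomm : ((Finset.univ.filter fun i => x i = true).filter fun i => y i = true)
        = ((Finset.univ.filter fun i => y i = true).filter fun i => x i = true) := by
      ext j; simp [Finset.mem_filter, and_comm]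
    have eup : up.length
        = ((Finset.univ.filter fun i => y i = true).filter fun i => ¬ (x i = true)).card := by
      rw [hup, Finset.length_toList]
      congr 1
      ext j
      simp [Finset.mem_filter, and_comm]
    have edn : dn.length
        = ((Finset.univ.filter fun i => x i = true).filter fun i => ¬ (y i = true)).card := by
      rw [hdn, Finset.length_toList]
      congr 1
      ext j
      simp [Finset.mem_filter]
    rw [ecomm] at e1
    omega
  have hlh : l.length = hammingDist x y := by
    unfold hammingDist
    rw [← List.toFinset_card_of_nodup hnd]
    congr 1
    ext j
    rw [List.mem_toFinset, hmem_l]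
    simp
  set w : (Qube d).Walk x y := (LayerMV.flipWalk x l).copy rfl hfold with hw
  have hwl : w.length = l.length := by
    rw [hw, SimpleGraph.Walk.length_copy, LayerMV.length_flipWalk]
  have hdist : (Qube d).dist x y = l.length := by
    have h1 : (Qube d).dist x y ≤ l.length := hwl ▸ SimpleGraph.dist_le w
    have h2 : hammingDist x y ≤ (Qube d).dist x y := by
      obtain ⟨w', hw'⟩ := (SimpleGraph.Walk.reachable w).exists_walk_length_eq_dist
      exact hw' ▸ LayerMV.hamming_le_length w'
    omega
  refine ⟨w, ?_, ?_, ?_⟩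
  · rw [hw, SimpleGraph.Walk.isPath_copy]
    exact LayerMV.flipWalk_isPath x l hnd
  · rw [hwl, hdist]
  · intro z hz hzX
    simp only [Set.mem_setOf_eq] at hzX
    rw [hw, SimpleGraph.Walk.support_copy, LayerMV.support_flipWalk, List.mem_map] at hz
    obtain ⟨m, hm, rfl⟩ := hz
    rw [List.mem_range] at hm
    have hzp : LayerMV.wt ((l.take m).foldl LayerMV.flip x) = p := hzX
    set k := up.length with hk
    have hll : l.length = k + k := by
      rw [hldef, List.length_append, ← hkk]
    have hnt : (l.take m).Nodup := List.Nodup.sublist (List.take_sublist _ _) hnd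
    have hcount := LayerMV.wt_foldl (l.take m) hnt x
    by_cases hmk : m ≤ k
    · have htake : l.take m = up.take m := List.take_append_of_le_length hmk
      have hc1 : ((l.take m).countP fun i => x i = true) = 0 := by
        rw [List.countP_eq_zero]
        intro a ha
        rw [htake] at ha
        have := (hmem_up a).mp (List.mem_of_mem_take ha)
        simp [this.1]
      have hc2 : ((l.take m).countP fun i => x i = false) = m := by
        have hlen : (l.take m).length = m := by
          rw [List.length_take]
          omega
        have hall : ((l.take m).countP fun i => x i = false) = (l.take m).length := by
          rw [List.countP_eq_length]
          intro a ha
          rw [htake] at ha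
          have := (hmem_up a).mp (List.mem_of_mem_take ha)
          simp [this.1]
        rw [hall, hlen]
      rw [hzp, hc1, hc2, hx'] at hcount
      have hm0 : m = 0 := by omega
      left
      rw [hm0]
      rfl
    · push_neg at hmk
      have htake : l.take m = up ++ dn.take (m - k) := by
        rw [hldef, List.take_append, List.take_of_length_le (by omega)]
      have hc1 : ((l.take m).countP fun i => x i = true) = m - k := by
        rw [htake, List.countP_append]
        have h0 : (up.countP fun i => x i = true) = 0 := by
          rw [List.countP_eq_zero]
          intro a ha
          simp [((hmem_up a).mp ha).1]
        have hlen : (dn.take (m - k)).length = m - k := by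
          rw [List.length_take]
          omega
        have h1 : ((dn.take (m - k)).countP fun i => x i = true) = m - k := by
          have hall : ((dn.take (m - k)).countP fun i => x i = true) = (dn.take (m - k)).length := by
            rw [List.countP_eq_length]
            intro a ha
            simp [((hmem_dn a).mp (List.mem_of_mem_take ha)).1]
          rw [hall, hlen]
        rw [h0, h1]
        omega
      have hc2 : ((l.take m).countP fun i => x i = false) = k := by
        rw [htake, List.countP_append]
        have h0 : (up.countP fun i => x i = false) = k := by
          have hall : (up.countP fun i => x i = false) = up.length := by
            rw [List.countP_eq_length]
            intro a ha
            simp [((hmem_up a).mp ha).1]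
          rw [hall, ← hk]
        have h1 : ((dn.take (m - k)).countP fun i => x i = false) = 0 := by
          rw [List.countP_eq_zero]
          intro a ha
          simp [((hmem_dn a).mp (List.mem_of_mem_take ha)).1]
        rw [h0, h1]
        omega
      rw [hzp, hc1, hc2, hx'] at hcount
      have hm2 : m = k + k := by omega
      right
      rw [hm2, List.take_of_length_le (by omega), hfold]
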